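/- Let I be a zero-dimensional ideal in ℂ[x₁,…,x_n] and P a polynomial. Then every eigenvalue of the multiplication-by-P operator on ℂ[x₁,…,x_n]/I is of the form P(v) for some point v in the vanishing set of I. -/

import Mathlib

open MvPolynomial

theorem eigenvalue_is_value_at_root
    (n : ℕ) (I : Ideal (MvPolynomial (Fin n) ℂ)) (hI : I ≠ ⊤)
    (hfin : FiniteDimensional ℂ (MvPolynomial (Fin n) ℂ ⧸ I))
    (P : MvPolynomial (Fin n) ℂ) (μ : ℂ)
    (hμ : Module.End.HasEigenvalue
      (LinearMap.mulLeft ℂ (Ideal.Quotient.mk I P)) μ) :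
    ∃ v : Fin n → ℂ, (∀ p ∈ I, MvPolynomial.eval v p = 0) ∧
      MvPolynomial.eval v P = μ := by
  -- get an eigenvector
  obtain ⟨q, hq⟩ := hμ.exists_hasEigenvector
  have hq0 : q ≠ 0 := hq.2
  have hmul : (Ideal.Quotient.mk I (P - MvPolynomial.C μ)) * q = 0 := by
    have := hq.1
    rw [Module.End.mem_eigenspace_iff] at this
    have hPq : (Ideal.Quotient.mk I P) * q = μ • q := this
    rw [map_sub, sub_mul, hPq]
    have : (Ideal.Quotient.mk I (MvPolynomial.C μ)) * q = μ • q := by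
      have : (Ideal.Quotient.mk I (MvPolynomial.C μ)) = algebraMap ℂ _ μ := rfl
      rw [this]; exact (Algebra.smul_def μ q).symm
    rw [this, sub_self]
  -- the element mk (P - C μ) is not a unit
  have hnotunit : ¬ IsUnit (Ideal.Quotient.mk I (P - MvPolynomial.C μ)) := by
    intro hu
    exact hq0 ((hu.mul_right_eq_zero).mp hmul)
  -- hence the ideal it generates is proper; choose a maximal ideal above it
  have hspan : Ideal.span {Ideal.Quotient.mk I (P - MvPolynomial.C μ)} ≠ ⊤ := by
    rwa [Ne, Ideal.span_singleton_eq_top]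
  obtain ⟨m, hm, hle⟩ := Ideal.exists_le_maximal _ hspan
  -- pull back to a maximal ideal of the polynomial ring
  let J : Ideal (MvPolynomial (Fin n) ℂ) := m.comap (Ideal.Quotient.mk I)
  have hJmax : J.IsMaximal :=
    Ideal.comap_isMaximal_of_surjective _ Ideal.Quotient.mk_surjective
  have hIJ : I ≤ J := by
    intro p hp
    show Ideal.Quotient.mk I p ∈ m
    rw [Ideal.Quotient.eq_zero_iff_mem.mpr hp]
    exact m.zero_mem
  have hPJ : P - MvPolynomial.C μ ∈ J :=
    hle (Ideal.subset_span rfl)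
  obtain ⟨v, hv⟩ := (MvPolynomial.isMaximal_iff_eq_vanishingIdeal_singleton (I := J)).mp hJmax
  refine ⟨v, ?_, ?_⟩
  · intro p hp
    have : p ∈ MvPolynomial.vanishingIdeal ℂ {v} := hv ▸ hIJ hp
    simpa [MvPolynomial.coe_aeval_eq_eval] using (MvPolynomial.mem_vanishingIdeal_singleton_iff v p).mp this
  · have : P - MvPolynomial.C μ ∈ MvPolynomial.vanishingIdeal ℂ {v} := hv ▸ hPJ
    have h := (MvPolynomial.mem_vanishingIdeal_singleton_iff v _).mp this
    simpa [sub_eq_zero, MvPolynomial.coe_aeval_eq_eval] using h
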